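/- arXiv:2301.04863 — 2 statements merged into one kernel-verified Lean document; each statement's English description precedes it below -/
import Mathlib

section
/- If the lifted best misfit Φ^† is in L¹_{μ_θ} and the joint misfit Φ^j is in L¹_{μ_θ⊗μ_δ}, then the joint posterior μ^j := (μ_θ⊗μ_δ)_{Φ^j} and the lifted best posterior μ^†_{θ,δ} := (μ_θ)_{Φ^†} ⊗ μ_δ satisfy max{ d_KL(μ^†_{θ,δ} ‖ μ^j), d_KL(μ^j ‖ μ^†_{θ,δ}) } ≤ C · ( ∫∫ |O(δ^†(θ) − e(θ,w))|²_{Σ_η^{−1}} d(μ_θ⊗μ_δ)(θ,w) )^{1/2}, where C = 2^{1/2} · exp( 2‖Φ^j‖_{L¹_{μ_θ⊗μ_δ}} + 2‖Φ^†‖_{L¹_{μ_θ}} ) · ( ‖Φ^j‖_{L¹_{μ_θ⊗μ_δ}}^{1/2} + ‖Φ^†‖_{L¹_{μ_θ}}^{1/2} ). -/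
open MeasureTheory Real Matrix ENNReal

open Classical in
/-- Kullback--Leibler divergence. -/
noncomputable def KLdiv {X : Type*} [MeasurableSpace X] (μ ν : Measure X) : ℝ≥0∞ :=
  if μ ≪ ν ∧ Integrable (fun x => Real.log ((μ.rnDeriv ν x).toReal)) μ
  then ENNReal.ofReal (∫ x, Real.log ((μ.rnDeriv ν x).toReal) ∂μ)
  else ⊤

/-- The posterior measure `μ_Φ` with density `exp (-Φ) / Z` w.r.t. `μ`. -/
noncomputable def posterior {X : Type*} [MeasurableSpace X] (μ : Measure X) (Φ : X → ℝ) :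
    Measure X :=
  μ.withDensity fun x => ENNReal.ofReal (Real.exp (-Φ x) / ∫ x', Real.exp (-Φ x') ∂μ)

lemma key_pointwise {a b : ℝ} (ha : 0 ≤ a) (hb : 0 ≤ b) :
    (b - a) * Real.exp (-a) + Real.exp (-b) - Real.exp (-a) ≤ |a - b| := by
  have h1 : Real.exp (-a) ≤ 1 := Real.exp_le_one_iff.mpr (by linarith)
  have h3 : 0 < Real.exp (-a) := Real.exp_pos _
  have h4 : 0 < Real.exp (-b) := Real.exp_pos _
  rcases le_total a b with h | h
  · rw [abs_of_nonpos (by linarith)]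
    have h5 : Real.exp (-b) ≤ Real.exp (-a) := Real.exp_le_exp.2 (by linarith)
    nlinarith
  · rw [abs_of_nonneg (by linarith)]
    have h5 : Real.exp (-a) = Real.exp (-b) * Real.exp (b - a) := by
      rw [← Real.exp_add]; ring_nf
    have h6 : (b - a) + 1 ≤ Real.exp (b - a) := Real.add_one_le_exp (b - a)
    have h2 : Real.exp (-b) ≤ 1 := Real.exp_le_one_iff.mpr (by linarith)
    nlinarith

section Helpers
variable {Z : Type*} [MeasurableSpace Z] {μ : Measure Z} [IsProbabilityMeasure μ]

lemma integrable_exp_neg {Φ : Z → ℝ} (hm : Measurable Φ) (hp : ∀ x, 0 ≤ Φ x) :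
    Integrable (fun x => Real.exp (-Φ x)) μ := by
  refine (integrable_const (1 : ℝ)).mono' ?_ ?_
  · exact (Real.measurable_exp.comp hm.neg).aestronglyMeasurable
  · filter_upwards with x
    rw [Real.norm_of_nonneg (Real.exp_pos _).le]
    exact Real.exp_le_one_iff.mpr (by simpa using hp x)

lemma exp_neg_integral_le {Φ : Z → ℝ} (hm : Measurable Φ) (hi : Integrable Φ μ)
    (hp : ∀ x, 0 ≤ Φ x) :
    Real.exp (-∫ x, Φ x ∂μ) ≤ ∫ x, Real.exp (-Φ x) ∂μ := by
  set c := ∫ x, Φ x ∂μ with hc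
  have key : ∀ x, Real.exp (-c) * (1 + c - Φ x) ≤ Real.exp (-Φ x) := by
    intro x
    have := Real.add_one_le_exp (c - Φ x)
    have hpos : (0:ℝ) < Real.exp (-c) := Real.exp_pos _
    have : Real.exp (-c) * ((c - Φ x) + 1) ≤ Real.exp (-c) * Real.exp (c - Φ x) := by
      exact mul_le_mul_of_nonneg_left this hpos.le
    rw [← Real.exp_add, show -c + (c - Φ x) = -Φ x by ring] at this
    linarith
  have hint1 : Integrable (fun x => Real.exp (-c) * (1 + c - Φ x)) μ := by
    exact (Integrable.sub (integrable_const _) hi).const_mul _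
  have := integral_mono hint1 (integrable_exp_neg hm hp) key
  calc Real.exp (-c) = ∫ x, Real.exp (-c) * (1 + c - Φ x) ∂μ := by
        rw [integral_const_mul, integral_sub (integrable_const _) hi, integral_const]
        simp [measure_univ, ← hc]
    _ ≤ _ := this

lemma Zpos {Φ : Z → ℝ} (hm : Measurable Φ) (hi : Integrable Φ μ) (hp : ∀ x, 0 ≤ Φ x) :
    0 < ∫ x, Real.exp (-Φ x) ∂μ :=
  lt_of_lt_of_le (Real.exp_pos _) (exp_neg_integral_le hm hi hp)

lemma posterior_isProbability {Φ : Z → ℝ} (hm : Measurable Φ) (hi : Integrable Φ μ)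
    (hp : ∀ x, 0 ≤ Φ x) : IsProbabilityMeasure (posterior μ Φ) := by
  set Zc := ∫ x, Real.exp (-Φ x) ∂μ with hZc
  have hZpos : 0 < Zc := Zpos hm hi hp
  constructor
  rw [posterior, withDensity_apply _ MeasurableSet.univ, Measure.restrict_univ,
    ← ofReal_integral_eq_lintegral_ofReal (((integrable_exp_neg hm hp)).div_const Zc)
      (Filter.Eventually.of_forall fun x => by positivity)]
  rw [integral_div, ← hZc, div_self hZpos.ne']
  simp

lemma kl_posterior_le {Φ1 Φ2 : Z → ℝ} (h1m : Measurable Φ1) (h2m : Measurable Φ2)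
    (h1i : Integrable Φ1 μ) (h2i : Integrable Φ2 μ)
    (h1p : ∀ x, 0 ≤ Φ1 x) (h2p : ∀ x, 0 ≤ Φ2 x) :
    KLdiv (posterior μ Φ1) (posterior μ Φ2) ≤
      ENNReal.ofReal (Real.exp (∫ x, Φ1 x ∂μ) * ∫ x, |Φ1 x - Φ2 x| ∂μ) := by
  set E1 : Z → ℝ := fun x => Real.exp (-Φ1 x) with hE1
  set E2 : Z → ℝ := fun x => Real.exp (-Φ2 x) with hE2
  set Z1 : ℝ := ∫ x, E1 x ∂μ with hZ1def
  set Z2 : ℝ := ∫ x, E2 x ∂μ with hZ2def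
  have hE1m : Measurable E1 := Real.measurable_exp.comp h1m.neg
  have hE2m : Measurable E2 := Real.measurable_exp.comp h2m.neg
  have hE1i : Integrable E1 μ := integrable_exp_neg h1m h1p
  have hE2i : Integrable E2 μ := integrable_exp_neg h2m h2p
  have hZ1 : 0 < Z1 := Zpos h1m h1i h1p
  have hZ2 : 0 < Z2 := Zpos h2m h2i h2p
  have hE1pos : ∀ x, 0 < E1 x := fun x => Real.exp_pos _
  have hE2pos : ∀ x, 0 < E2 x := fun x => Real.exp_pos _
  have hE1le : ∀ x, E1 x ≤ 1 := fun x => Real.exp_le_one_iff.mpr (by simpa using h1p x)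
  set g1 : Z → ℝ≥0∞ := fun x => ENNReal.ofReal (E1 x / Z1) with hg1
  set g2 : Z → ℝ≥0∞ := fun x => ENNReal.ofReal (E2 x / Z2) with hg2
  have hg1m : Measurable g1 := ENNReal.measurable_ofReal.comp (hE1m.div_const _)
  have hg2m : Measurable g2 := ENNReal.measurable_ofReal.comp (hE2m.div_const _)
  have hg2ne0 : ∀ x, g2 x ≠ 0 := fun x =>
    (ENNReal.ofReal_pos.mpr (by positivity)).ne'
  have hμ1 : posterior μ Φ1 = μ.withDensity g1 := rfl
  have hμ2 : posterior μ Φ2 = μ.withDensity g2 := rfl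
  set h : Z → ℝ≥0∞ := fun x => (g2 x)⁻¹ * g1 x with hh
  have hhm : Measurable h := hg2m.inv.mul hg1m
  have hkey : (posterior μ Φ2).withDensity h = posterior μ Φ1 := by
    rw [hμ2, hμ1]
    have : (μ.withDensity g2).withDensity h
        = ((μ.withDensity g2).withDensity fun x => (g2 x)⁻¹).withDensity g1 := by
      rw [← withDensity_mul _ (f := fun x => (g2 x)⁻¹) hg2m.inv hg1m]; rfl
    rw [this, withDensity_inv_same hg2m
      (Filter.Eventually.of_forall hg2ne0)
      (Filter.Eventually.of_forall fun x => ENNReal.ofReal_ne_top)]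
  haveI hP1 : IsProbabilityMeasure (posterior μ Φ1) := posterior_isProbability h1m h1i h1p
  haveI hP2 : IsProbabilityMeasure (posterior μ Φ2) := posterior_isProbability h2m h2i h2p
  have hac : posterior μ Φ1 ≪ posterior μ Φ2 := by
    rw [← hkey]; exact withDensity_absolutelyContinuous _ _
  have hrn : (posterior μ Φ1).rnDeriv (posterior μ Φ2) =ᵐ[posterior μ Φ2] h := by
    rw [← hkey]; exact Measure.rnDeriv_withDensity _ hhm
  have hrn1 : (posterior μ Φ1).rnDeriv (posterior μ Φ2) =ᵐ[posterior μ Φ1] h :=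
    hac.ae_le hrn
  set L : Z → ℝ := fun x => (Φ2 x - Φ1 x) + (Real.log Z2 - Real.log Z1) with hL
  have hval : ∀ x, Real.log ((h x).toReal) = L x := by
    intro x
    have h2d : (0:ℝ) < E2 x / Z2 := by positivity
    have h1d : (0:ℝ) < E1 x / Z1 := by positivity
    have : (h x).toReal = (E2 x / Z2)⁻¹ * (E1 x / Z1) := by
      rw [hh]
      simp only [hg1, hg2, ENNReal.toReal_mul, ENNReal.toReal_inv,
        ENNReal.toReal_ofReal h2d.le, ENNReal.toReal_ofReal h1d.le]
    rw [this, Real.log_mul (by positivity) (by positivity), Real.log_inv,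
      Real.log_div (hE2pos x).ne' hZ2.ne', Real.log_div (hE1pos x).ne' hZ1.ne',
      hE1, hE2]
    simp only [Real.log_exp]
    ring
  have hLae : (fun x => Real.log (((posterior μ Φ1).rnDeriv (posterior μ Φ2) x).toReal))
      =ᵐ[posterior μ Φ1] L := by
    filter_upwards [hrn1] with x hx
    rw [hx, hval]
  -- integrability of Φ2 - Φ1 w.r.t. posterior μ Φ1
  have hsub : Integrable (fun x => Φ2 x - Φ1 x) μ := h2i.sub h1i
  have hg1nn : ∀ x, (0:ℝ) ≤ E1 x / Z1 := fun x => by positivity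
  have hdiff_int : Integrable (fun x => Φ2 x - Φ1 x) (posterior μ Φ1) := by
    rw [hμ1]
    have : g1 = fun x => ((E1 x / Z1).toNNReal : ℝ≥0∞) := rfl
    rw [this, integrable_withDensity_iff_integrable_smul₀
      ((hE1m.div_const _).real_toNNReal.aemeasurable)]
    refine (hsub.abs.const_mul (1/Z1)).mono' ?_ ?_
    · exact ((((hE1m.div_const _).real_toNNReal).coe_nnreal_real).smul
        (h2m.sub h1m)).aestronglyMeasurable
    · filter_upwards with x
      rw [NNReal.smul_def, smul_eq_mul, Real.norm_eq_abs, abs_mul,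
        Real.coe_toNNReal _ (hg1nn x)]
      have hb : |E1 x / Z1| ≤ 1/Z1 := by
        rw [abs_of_nonneg (hg1nn x)]
        gcongr
        exact hE1le x
      exact mul_le_mul_of_nonneg_right hb (abs_nonneg _)
  have hLint : Integrable L (posterior μ Φ1) := hdiff_int.add (integrable_const _)
  have hlogint : Integrable
      (fun x => Real.log (((posterior μ Φ1).rnDeriv (posterior μ Φ2) x).toReal))
      (posterior μ Φ1) := hLint.congr hLae.symm
  rw [KLdiv, if_pos ⟨hac, hlogint⟩, integral_congr_ae hLae]
  apply ENNReal.ofReal_le_ofReal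
  -- the integrand E1 * (Φ2 - Φ1) is integrable w.r.t. μ
  have hprod : Integrable (fun x => (Φ2 x - Φ1 x) * E1 x) μ := by
    refine hsub.abs.mono' ((h2m.sub h1m).mul hE1m).aestronglyMeasurable ?_
    filter_upwards with x
    rw [Real.norm_eq_abs, abs_mul, abs_of_nonneg (hE1pos x).le]
    exact mul_le_of_le_one_right (abs_nonneg _) (hE1le x)
  have hint_eq : ∫ x, L x ∂(posterior μ Φ1)
      = (1/Z1) * (∫ x, (Φ2 x - Φ1 x) * E1 x ∂μ) + (Real.log Z2 - Real.log Z1) := by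
    rw [hL, integral_add hdiff_int (integrable_const _), integral_const, probReal_univ]
    simp only [ENNReal.toReal_one, one_smul]
    congr 1
    rw [hμ1]
    have hg1eq : g1 = fun x => ((E1 x / Z1).toNNReal : ℝ≥0∞) := rfl
    rw [hg1eq, integral_withDensity_eq_integral_smul₀
      ((hE1m.div_const _).real_toNNReal.aemeasurable) _, ← integral_const_mul]
    refine integral_congr_ae (Filter.Eventually.of_forall fun x => ?_)
    show (E1 x / Z1).toNNReal • (Φ2 x - Φ1 x) = 1 / Z1 * ((Φ2 x - Φ1 x) * E1 x)
    rw [NNReal.smul_def, smul_eq_mul, Real.coe_toNNReal _ (hg1nn x)]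
    ring
  rw [hint_eq]
  have hlog_le : Real.log Z2 - Real.log Z1 ≤ (1/Z1) * ∫ x, (E2 x - E1 x) ∂μ := by
    rw [← Real.log_div hZ2.ne' hZ1.ne', integral_sub hE2i hE1i, ← hZ1def, ← hZ2def]
    calc Real.log (Z2/Z1) ≤ Z2/Z1 - 1 := Real.log_le_sub_one_of_pos (div_pos hZ2 hZ1)
      _ = (1/Z1) * (Z2 - Z1) := by field_simp
  have habs_nonneg : 0 ≤ ∫ x, |Φ1 x - Φ2 x| ∂μ :=
    integral_nonneg fun x => abs_nonneg _
  have hZinv : 1/Z1 ≤ Real.exp (∫ x, Φ1 x ∂μ) := by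
    rw [div_le_iff₀ hZ1]
    have hlow := exp_neg_integral_le h1m h1i h1p
    calc (1:ℝ) = Real.exp (∫ x, Φ1 x ∂μ) * Real.exp (-∫ x, Φ1 x ∂μ) := by
          rw [← Real.exp_add]; simp
      _ ≤ Real.exp (∫ x, Φ1 x ∂μ) * Z1 :=
          mul_le_mul_of_nonneg_left hlow (Real.exp_pos _).le
  have hsubE : Integrable (fun x => E2 x - E1 x) μ := hE2i.sub hE1i
  calc (1/Z1) * (∫ x, (Φ2 x - Φ1 x) * E1 x ∂μ) + (Real.log Z2 - Real.log Z1)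
      ≤ (1/Z1) * (∫ x, (Φ2 x - Φ1 x) * E1 x ∂μ) + (1/Z1) * ∫ x, (E2 x - E1 x) ∂μ := by
        linarith
    _ = (1/Z1) * ∫ x, ((Φ2 x - Φ1 x) * E1 x + (E2 x - E1 x)) ∂μ := by
        rw [integral_add hprod hsubE]; ring
    _ ≤ (1/Z1) * ∫ x, |Φ1 x - Φ2 x| ∂μ := by
        have hmono : ∫ x, ((Φ2 x - Φ1 x) * E1 x + (E2 x - E1 x)) ∂μ
            ≤ ∫ x, |Φ1 x - Φ2 x| ∂μ := by
          refine integral_mono (hprod.add hsubE) (h1i.sub h2i).abs fun x => ?_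
          have := key_pointwise (h1p x) (h2p x)
          simp only [hE1, hE2] at this ⊢
          linarith
        exact mul_le_mul_of_nonneg_left hmono (by positivity)
    _ ≤ Real.exp (∫ x, Φ1 x ∂μ) * ∫ x, |Φ1 x - Φ2 x| ∂μ :=
        mul_le_mul_of_nonneg_right hZinv habs_nonneg

end Helpers

lemma integral_comp_fst {X W : Type*} [MeasurableSpace X] [MeasurableSpace W]
    (μθ : Measure X) [SFinite μθ] (μδ : Measure W) [IsProbabilityMeasure μδ]
    {f : X → ℝ} (hf : AEStronglyMeasurable f μθ) :
    ∫ p, f p.1 ∂(μθ.prod μδ) = ∫ x, f x ∂μθ := by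
  have h1 : ∫ p, f p.1 ∂(μθ.prod μδ) = ∫ x, f x ∂((μθ.prod μδ).map Prod.fst) := by
    rw [integral_map measurable_fst.aemeasurable]
    rw [Measure.map_fst_prod, measure_univ, one_smul]
    exact hf
  rw [h1, show (μθ.prod μδ).map Prod.fst = (μθ.prod μδ).fst from rfl, Measure.fst_prod]

lemma posterior_prod {X W : Type*} [MeasurableSpace X] [MeasurableSpace W]
    (μθ : Measure X) [IsProbabilityMeasure μθ] (μδ : Measure W) [IsProbabilityMeasure μδ]
    {Φ : X → ℝ} (hm : Measurable Φ) (hi : Integrable Φ μθ) (hp : ∀ x, 0 ≤ Φ x) :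
    (posterior μθ Φ).prod μδ = posterior (μθ.prod μδ) (fun p => Φ p.1) := by
  set Zθ : ℝ := ∫ x, Real.exp (-Φ x) ∂μθ with hZθ
  have hEm : Measurable fun x => Real.exp (-Φ x) := Real.measurable_exp.comp hm.neg
  have hZeq : ∫ p, Real.exp (-Φ p.1) ∂(μθ.prod μδ) = Zθ :=
    integral_comp_fst μθ μδ (hEm.aestronglyMeasurable)
  set g : X → ℝ≥0∞ := fun x => ENNReal.ofReal (Real.exp (-Φ x) / Zθ) with hg
  have hgm : Measurable g := ENNReal.measurable_ofReal.comp (hEm.div_const _)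
  have hRHS : posterior (μθ.prod μδ) (fun p => Φ p.1)
      = (μθ.prod μδ).withDensity (fun p => g p.1) := by
    rw [posterior]
    congr 1
    funext p
    rw [hg, hZeq]
  haveI := posterior_isProbability (μ := μθ) hm hi hp
  refine Measure.prod_eq fun s t hs ht => ?_
  have hGm : AEMeasurable (fun p : X × W => g p.1) ((μθ.restrict s).prod (μδ.restrict t)) :=
    (hgm.comp measurable_fst).aemeasurable
  rw [hRHS, withDensity_apply _ (hs.prod ht), ← Measure.prod_restrict,
    MeasureTheory.lintegral_prod _ hGm]
  simp only [lintegral_const, Measure.restrict_apply_univ]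
  rw [lintegral_mul_const _ hgm, posterior, withDensity_apply _ hs, ← hZθ, ← hg]

open scoped MatrixOrder in
noncomputable def Matrix.PosSemidef.sqrt {n : ℕ} {A : Matrix (Fin n) (Fin n) ℝ}
    (_hA : A.PosSemidef) : Matrix (Fin n) (Fin n) ℝ := CFC.sqrt A

open scoped MatrixOrder in
lemma Matrix.PosSemidef.posSemidef_sqrt {n : ℕ} {A : Matrix (Fin n) (Fin n) ℝ}
    (hA : A.PosSemidef) : hA.sqrt.PosSemidef :=
  Matrix.nonneg_iff_posSemidef.mp (CFC.sqrt_nonneg A)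

open scoped MatrixOrder in
lemma Matrix.PosSemidef.sqrt_mul_self {n : ℕ} {A : Matrix (Fin n) (Fin n) ℝ}
    (hA : A.PosSemidef) : hA.sqrt * hA.sqrt = A :=
  CFC.sqrt_mul_sqrt_self A hA.nonneg

section Quad
variable {n : ℕ}

lemma dot_CS (u v : Fin n → ℝ) :
    |u ⬝ᵥ v| ≤ Real.sqrt (u ⬝ᵥ u) * Real.sqrt (v ⬝ᵥ v) := by
  have key : ∀ w : Fin n → ℝ, w ⬝ᵥ w = ∑ i, w i ^ 2 := fun w => by
    simp [dotProduct, sq]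
  have hd : u ⬝ᵥ v = ∑ i, u i * v i := rfl
  have h2 := Real.sum_mul_le_sqrt_mul_sqrt Finset.univ u v
  have h3 := Real.sum_mul_le_sqrt_mul_sqrt Finset.univ (fun i => -u i) v
  have e1 : ∑ i, -u i * v i = -∑ i, u i * v i := by
    rw [← Finset.sum_neg_distrib]; exact Finset.sum_congr rfl fun i _ => by ring
  have e2 : ∑ i, (-u i) ^ 2 = ∑ i, u i ^ 2 := Finset.sum_congr rfl fun i _ => by ring
  rw [e1, e2] at h3
  rw [key, key, hd, abs_le]
  exact ⟨by linarith, by linarith⟩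

variable {A : Matrix (Fin n) (Fin n) ℝ}

lemma quad_eq (hA : A.PosSemidef) (u v : Fin n → ℝ) :
    u ⬝ᵥ (A *ᵥ v) = (hA.sqrt *ᵥ u) ⬝ᵥ (hA.sqrt *ᵥ v) := by
  set S := hA.sqrt with hS
  have hsym : Sᵀ = S := by
    have := hA.posSemidef_sqrt.1
    rwa [Matrix.IsHermitian, Matrix.conjTranspose_eq_transpose_of_trivial] at this
  conv_lhs => rw [← hA.sqrt_mul_self, ← Matrix.mulVec_mulVec]
  rw [Matrix.dotProduct_mulVec u S, ← hsym, Matrix.vecMul_transpose, hsym]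

lemma quad_nonneg (hA : A.PosSemidef) (v : Fin n → ℝ) : 0 ≤ v ⬝ᵥ (A *ᵥ v) := by
  rw [quad_eq hA]
  exact Finset.sum_nonneg fun i _ => mul_self_nonneg _

lemma quad_CS (hA : A.PosSemidef) (u v : Fin n → ℝ) :
    |u ⬝ᵥ (A *ᵥ v)| ≤ Real.sqrt (u ⬝ᵥ (A *ᵥ u)) * Real.sqrt (v ⬝ᵥ (A *ᵥ v)) := by
  rw [quad_eq hA, quad_eq hA u u, quad_eq hA v v]
  exact dot_CS _ _

lemma sqrt_add_le' {x y : ℝ} (hx : 0 ≤ x) (hy : 0 ≤ y) :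
    Real.sqrt (x + y) ≤ Real.sqrt x + Real.sqrt y := by
  have h1 := Real.sq_sqrt hx
  have h2 := Real.sq_sqrt hy
  have h3 := Real.sqrt_nonneg x
  have h4 := Real.sqrt_nonneg y
  have h : x + y ≤ (Real.sqrt x + Real.sqrt y) ^ 2 := by nlinarith
  calc Real.sqrt (x + y) ≤ Real.sqrt ((Real.sqrt x + Real.sqrt y) ^ 2) :=
        Real.sqrt_le_sqrt h
    _ = Real.sqrt x + Real.sqrt y := Real.sqrt_sq (by positivity)

lemma quad_symm (hA : A.PosSemidef) (u v : Fin n → ℝ) :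
    v ⬝ᵥ (A *ᵥ u) = u ⬝ᵥ (A *ᵥ v) := by
  rw [quad_eq hA, quad_eq hA u v, dotProduct_comm]

lemma quad_triangle (hA : A.PosSemidef) (u v : Fin n → ℝ) :
    Real.sqrt ((u + v) ⬝ᵥ (A *ᵥ (u + v)))
      ≤ Real.sqrt (u ⬝ᵥ (A *ᵥ u)) + Real.sqrt (v ⬝ᵥ (A *ᵥ v)) := by
  have hexp : (u + v) ⬝ᵥ (A *ᵥ (u + v))
      = u ⬝ᵥ (A *ᵥ u) + 2 * (u ⬝ᵥ (A *ᵥ v)) + v ⬝ᵥ (A *ᵥ v) := by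
    rw [Matrix.mulVec_add, dotProduct_add, add_dotProduct,
      add_dotProduct]
    have := quad_symm hA u v
    linarith
  have hCS := quad_CS hA u v
  have h1 := Real.sq_sqrt (quad_nonneg hA u)
  have h2 := Real.sq_sqrt (quad_nonneg hA v)
  have h3 := Real.sqrt_nonneg (u ⬝ᵥ (A *ᵥ u))
  have h4 := Real.sqrt_nonneg (v ⬝ᵥ (A *ᵥ v))
  have habs : u ⬝ᵥ (A *ᵥ v) ≤ Real.sqrt (u ⬝ᵥ (A *ᵥ u)) * Real.sqrt (v ⬝ᵥ (A *ᵥ v)) :=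
    (le_abs_self _).trans hCS
  have hle : (u + v) ⬝ᵥ (A *ᵥ (u + v))
      ≤ (Real.sqrt (u ⬝ᵥ (A *ᵥ u)) + Real.sqrt (v ⬝ᵥ (A *ᵥ v))) ^ 2 := by
    rw [hexp]; nlinarith
  calc Real.sqrt ((u + v) ⬝ᵥ (A *ᵥ (u + v)))
      ≤ Real.sqrt ((Real.sqrt (u ⬝ᵥ (A *ᵥ u)) + Real.sqrt (v ⬝ᵥ (A *ᵥ v))) ^ 2) :=
        Real.sqrt_le_sqrt hle
    _ = _ := Real.sqrt_sq (by positivity)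

lemma quad_neg (u : Fin n → ℝ) : (-u) ⬝ᵥ (A *ᵥ (-u)) = u ⬝ᵥ (A *ᵥ u) := by
  rw [Matrix.mulVec_neg, neg_dotProduct, dotProduct_neg, neg_neg]

lemma quad_diff_bound (hA : A.PosSemidef) (u v : Fin n → ℝ) :
    |u ⬝ᵥ (A *ᵥ u) - v ⬝ᵥ (A *ᵥ v)|
      ≤ Real.sqrt ((v - u) ⬝ᵥ (A *ᵥ (v - u)))
        * (Real.sqrt (u ⬝ᵥ (A *ᵥ u)) + Real.sqrt (v ⬝ᵥ (A *ᵥ v))) := by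
  have hdiff : u ⬝ᵥ (A *ᵥ u) - v ⬝ᵥ (A *ᵥ v) = (u - v) ⬝ᵥ (A *ᵥ (u + v)) := by
    rw [Matrix.mulVec_add, dotProduct_add, sub_dotProduct,
      sub_dotProduct]
    have := quad_symm hA u v
    linarith
  have hneg : (u - v) ⬝ᵥ (A *ᵥ (u - v)) = (v - u) ⬝ᵥ (A *ᵥ (v - u)) := by
    have h : u - v = -(v - u) := by ring
    rw [h, quad_neg]
  calc |u ⬝ᵥ (A *ᵥ u) - v ⬝ᵥ (A *ᵥ v)|
      = |(u - v) ⬝ᵥ (A *ᵥ (u + v))| := by rw [hdiff]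
    _ ≤ Real.sqrt ((u - v) ⬝ᵥ (A *ᵥ (u - v))) * Real.sqrt ((u + v) ⬝ᵥ (A *ᵥ (u + v))) :=
        quad_CS hA _ _
    _ ≤ _ := by
        rw [hneg]
        exact mul_le_mul_of_nonneg_left (quad_triangle hA u v) (Real.sqrt_nonneg _)

lemma quad_sq_bound (hA : A.PosSemidef) (u v : Fin n → ℝ) :
    (v - u) ⬝ᵥ (A *ᵥ (v - u)) ≤ 2 * (u ⬝ᵥ (A *ᵥ u)) + 2 * (v ⬝ᵥ (A *ᵥ v)) := by
  have h := quad_triangle hA v (-u)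
  have hvu : v + -u = v - u := by funext i; simp [sub_eq_add_neg]
  rw [hvu, quad_neg] at h
  have h1 := Real.sq_sqrt (quad_nonneg hA u)
  have h2 := Real.sq_sqrt (quad_nonneg hA v)
  have h3 := Real.sq_sqrt (quad_nonneg hA (v - u))
  have h4 := Real.sqrt_nonneg (u ⬝ᵥ (A *ᵥ u))
  have h5 := Real.sqrt_nonneg (v ⬝ᵥ (A *ᵥ v))
  have h6 := Real.sqrt_nonneg ((v - u) ⬝ᵥ (A *ᵥ (v - u)))
  have hsq := mul_self_le_mul_self h6 h
  nlinarith [sq_nonneg (Real.sqrt (v ⬝ᵥ (A *ᵥ v)) - Real.sqrt (u ⬝ᵥ (A *ᵥ u)))]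
end Quad

set_option maxHeartbeats 1000000 in
theorem stmt11 {X W U : Type*} [MeasurableSpace X] [MeasurableSpace W]
    [NormedAddCommGroup U] [NormedSpace ℝ U] [CompleteSpace U]
    [MeasurableSpace U] [BorelSpace U]
    (μθ : Measure X) [IsProbabilityMeasure μθ] (μδ : Measure W) [IsProbabilityMeasure μδ]
    {n : ℕ}
    (Mdag Mappr : X → U) (hMdag : Measurable Mdag) (hMappr : Measurable Mappr)
    (e : X × W → U) (he : Measurable e)
    (O : U →L[ℝ] (Fin n → ℝ)) (y : Fin n → ℝ)
    (Γ : Matrix (Fin n) (Fin n) ℝ) (hΓ : Γ.PosDef)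
    (Φdag : X → ℝ) (Φjoint : X × W → ℝ)
    (hΦdag : Φdag = fun θ => (1/2) * ((y - O (Mdag θ)) ⬝ᵥ (Γ⁻¹ *ᵥ (y - O (Mdag θ)))))
    (hΦjoint : Φjoint = fun p => (1/2) *
      ((y - O (Mappr p.1) - O (e p)) ⬝ᵥ (Γ⁻¹ *ᵥ (y - O (Mappr p.1) - O (e p)))))
    (hid : Integrable Φdag μθ) (hij : Integrable Φjoint (μθ.prod μδ)) :
    max (KLdiv ((posterior μθ Φdag).prod μδ) (posterior (μθ.prod μδ) Φjoint))
        (KLdiv (posterior (μθ.prod μδ) Φjoint) ((posterior μθ Φdag).prod μδ)) ≤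
      ENNReal.ofReal
        ((Real.sqrt 2 *
            Real.exp (2 * (∫ p, |Φjoint p| ∂(μθ.prod μδ)) + 2 * ∫ θ, |Φdag θ| ∂μθ) *
            (Real.sqrt (∫ p, |Φjoint p| ∂(μθ.prod μδ)) + Real.sqrt (∫ θ, |Φdag θ| ∂μθ))) *
          Real.sqrt (∫ p, |(O (Mdag p.1 - Mappr p.1 - e p)) ⬝ᵥ
            (Γ⁻¹ *ᵥ (O (Mdag p.1 - Mappr p.1 - e p)))| ∂(μθ.prod μδ))) := by
  classical
  have hA : (Γ⁻¹).PosSemidef := hΓ.inv.posSemidef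
  set Q : (Fin n → ℝ) → ℝ := fun v => v ⬝ᵥ (Γ⁻¹ *ᵥ v) with hQ
  have hQc : Continuous Q := by
    have h : Q = fun v => ∑ i, v i * ∑ j, Γ⁻¹ i j * v j := rfl
    rw [h]
    exact continuous_finset_sum _ fun i _ => (continuous_apply i).mul
      (continuous_finset_sum _ fun j _ => continuous_const.mul (continuous_apply j))
  have hOm : Measurable (⇑O) := O.continuous.measurable
  set ρ := μθ.prod μδ with hρ
  -- vector-valued functions on the product space
  set a : X × W → (Fin n → ℝ) := fun p => y - O (Mdag p.1) with ha
  set b : X × W → (Fin n → ℝ) := fun p => y - O (Mappr p.1) - O (e p) with hbdef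
  set d : X × W → (Fin n → ℝ) := fun p => O (Mdag p.1) - O (Mappr p.1) - O (e p) with hddef
  have ham : Measurable a := measurable_const.sub (hOm.comp (hMdag.comp measurable_fst))
  have hbm : Measurable b :=
    (measurable_const.sub (hOm.comp (hMappr.comp measurable_fst))).sub (hOm.comp he)
  have hdm : Measurable d :=
    ((hOm.comp (hMdag.comp measurable_fst)).sub (hOm.comp (hMappr.comp measurable_fst))).sub
      (hOm.comp he)
  have hba : ∀ p, b p - a p = d p := by
    intro p; funext i
    simp only [ha, hbdef, hddef, Pi.sub_apply]
    ring
  -- misfits as quadratic forms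
  have hΦdagm : Measurable Φdag := by
    rw [hΦdag]
    exact (measurable_const.mul
      (hQc.measurable.comp (measurable_const.sub (hOm.comp hMdag))))
  have hΦjm : Measurable Φjoint := by
    rw [hΦjoint]
    exact measurable_const.mul (hQc.measurable.comp hbm)
  have hΦdagp : ∀ θ, 0 ≤ Φdag θ := by
    intro θ; rw [hΦdag]
    exact mul_nonneg (by norm_num) (quad_nonneg hA _)
  have hΦjp : ∀ p, 0 ≤ Φjoint p := by
    intro p; rw [hΦjoint]
    exact mul_nonneg (by norm_num) (quad_nonneg hA _)
  set Φ1 : X × W → ℝ := fun p => Φdag p.1 with hΦ1def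
  have hΦ1m : Measurable Φ1 := hΦdagm.comp measurable_fst
  have hΦ1p : ∀ p, 0 ≤ Φ1 p := fun p => hΦdagp p.1
  have hmp : MeasurePreserving (Prod.fst) ρ μθ :=
    ⟨measurable_fst, by rw [hρ, Measure.map_fst_prod, measure_univ, one_smul]⟩
  have hΦ1i : Integrable Φ1 ρ := (hmp.integrable_comp hΦdagm.aestronglyMeasurable).mpr hid
  have hΦ1a : Φ1 = fun p => (1/2) * Q (a p) := by
    funext p; rw [hΦ1def, hΦdag]
  have hΦ2b : Φjoint = fun p => (1/2) * Q (b p) := hΦjoint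
  -- the posterior product identity
  have hpp : (posterior μθ Φdag).prod μδ = posterior ρ Φ1 :=
    posterior_prod μθ μδ hΦdagm hid hΦdagp
  -- abbreviations for the integrals
  set S1 : ℝ := ∫ p, Φ1 p ∂ρ with hS1
  set S2 : ℝ := ∫ p, Φjoint p ∂ρ with hS2
  set D : ℝ := ∫ p, |Φ1 p - Φjoint p| ∂ρ with hD
  have hS1nn : 0 ≤ S1 := integral_nonneg hΦ1p
  have hS2nn : 0 ≤ S2 := integral_nonneg hΦjp
  have hDnn : 0 ≤ D := integral_nonneg fun p => abs_nonneg _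
  -- relate statement integrals
  have hsd : ∫ θ, |Φdag θ| ∂μθ = S1 := by
    rw [hS1, hΦ1def, integral_comp_fst μθ μδ hΦdagm.aestronglyMeasurable]
    exact (integral_congr_ae (Filter.Eventually.of_forall fun θ =>
      abs_of_nonneg (hΦdagp θ))).symm ▸ rfl
  have hsj : ∫ p, |Φjoint p| ∂ρ = S2 :=
    integral_congr_ae (Filter.Eventually.of_forall fun p => abs_of_nonneg (hΦjp p))
  -- scalar auxiliary functions
  set fa : X × W → ℝ := fun p => Real.sqrt (Q (a p)) with hfa
  set fb : X × W → ℝ := fun p => Real.sqrt (Q (b p)) with hfb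
  set fd : X × W → ℝ := fun p => Real.sqrt (Q (d p)) with hfd
  have hfam : Measurable fa := Real.continuous_sqrt.measurable.comp (hQc.measurable.comp ham)
  have hfbm : Measurable fb := Real.continuous_sqrt.measurable.comp (hQc.measurable.comp hbm)
  have hfdm : Measurable fd := Real.continuous_sqrt.measurable.comp (hQc.measurable.comp hdm)
  have hfa2 : ∀ p, fa p ^ 2 = Q (a p) := fun p => Real.sq_sqrt (quad_nonneg hA _)
  have hfb2 : ∀ p, fb p ^ 2 = Q (b p) := fun p => Real.sq_sqrt (quad_nonneg hA _)
  have hfd2 : ∀ p, fd p ^ 2 = Q (d p) := fun p => Real.sq_sqrt (quad_nonneg hA _)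
  have hdom : Integrable (fun p => 4 * Φ1 p + 4 * Φjoint p) ρ :=
    (hΦ1i.const_mul 4).add (hij.const_mul 4)
  have hQd_le : ∀ p, Q (d p) ≤ 4 * Φ1 p + 4 * Φjoint p := by
    intro p
    have h := quad_sq_bound hA (a p) (b p)
    rw [hba p] at h
    have e1 : Φ1 p = (1/2) * Q (a p) := by rw [hΦ1a]
    have e2 : Φjoint p = (1/2) * Q (b p) := by rw [hΦ2b]
    rw [e1, e2]
    linarith
  have hfab_le : ∀ p, (fa p + fb p) ^ 2 ≤ 4 * Φ1 p + 4 * Φjoint p := by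
    intro p
    have e1 : Φ1 p = (1/2) * Q (a p) := by rw [hΦ1a]
    have e2 : Φjoint p = (1/2) * Q (b p) := by rw [hΦ2b]
    rw [e1, e2, ← hfa2, ← hfb2]
    nlinarith [sq_nonneg (fa p - fb p)]
  have hQdnn : ∀ p, (0:ℝ) ≤ Q (d p) := fun p => quad_nonneg hA _
  have hQd_int : Integrable (fun p => Q (d p)) ρ := by
    refine hdom.mono' (hQc.measurable.comp hdm).aestronglyMeasurable ?_
    filter_upwards with p
    rw [Real.norm_of_nonneg (hQdnn p)]
    exact hQd_le p
  have hfabsq_int : Integrable (fun p => (fa p + fb p) ^ 2) ρ := by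
    refine hdom.mono' (((hfam.add hfbm).pow_const 2).aestronglyMeasurable) ?_
    filter_upwards with p
    rw [Real.norm_of_nonneg (sq_nonneg _)]
    exact hfab_le p
  set I : ℝ := ∫ p, Q (d p) ∂ρ with hIdef
  have hInn : 0 ≤ I := integral_nonneg hQdnn
  -- Hölder / Cauchy-Schwarz in L²
  have htwo : ENNReal.ofReal (2:ℝ) = 2 := by norm_num
  have hfd_mem : MemLp fd (ENNReal.ofReal 2) ρ := by
    rw [htwo, memLp_two_iff_integrable_sq hfdm.aestronglyMeasurable]
    exact hQd_int.congr (Filter.Eventually.of_forall fun p => (hfd2 p).symm)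
  have hfab_mem : MemLp (fun p => fa p + fb p) (ENNReal.ofReal 2) ρ := by
    rw [htwo, memLp_two_iff_integrable_sq (f := fun p => fa p + fb p)
      (hfam.add hfbm).aestronglyMeasurable]
    exact hfabsq_int
  have hconj : Real.HolderConjugate 2 2 := Real.HolderConjugate.two_two
  have hH := integral_mul_le_Lp_mul_Lq_of_nonneg hconj
    (Filter.Eventually.of_forall fun p => Real.sqrt_nonneg _)
    (Filter.Eventually.of_forall fun p => add_nonneg (Real.sqrt_nonneg _) (Real.sqrt_nonneg _))
    hfd_mem hfab_mem
  have eI : ∫ p, fd p ^ (2:ℝ) ∂ρ = I := by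
    rw [hIdef]
    refine integral_congr_ae (Filter.Eventually.of_forall fun p => ?_)
    simp only [Real.rpow_two]
    exact hfd2 p
  have eAB : ∫ p, (fa p + fb p) ^ (2:ℝ) ∂ρ = ∫ p, (fa p + fb p) ^ 2 ∂ρ := by
    refine integral_congr_ae (Filter.Eventually.of_forall fun p => ?_)
    simp only [Real.rpow_two]
  rw [eI, eAB] at hH
  have hABnn : 0 ≤ ∫ p, (fa p + fb p) ^ 2 ∂ρ := integral_nonneg fun p => sq_nonneg _
  have hH2 : ∫ p, fd p * (fa p + fb p) ∂ρ
      ≤ Real.sqrt I * Real.sqrt (∫ p, (fa p + fb p) ^ 2 ∂ρ) := by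
    calc ∫ p, fd p * (fa p + fb p) ∂ρ
        ≤ I ^ (1/(2:ℝ)) * (∫ p, (fa p + fb p) ^ 2 ∂ρ) ^ (1/(2:ℝ)) := hH
      _ = _ := by rw [← Real.sqrt_eq_rpow, ← Real.sqrt_eq_rpow]
  have hAB_le : ∫ p, (fa p + fb p) ^ 2 ∂ρ ≤ 4 * S1 + 4 * S2 := by
    have := integral_mono hfabsq_int hdom hfab_le
    rwa [integral_add (hΦ1i.const_mul 4) (hij.const_mul 4), integral_const_mul,
      integral_const_mul, ← hS1, ← hS2] at this
  have hsqrtAB : Real.sqrt (∫ p, (fa p + fb p) ^ 2 ∂ρ) ≤ 2 * Real.sqrt (S1 + S2) := by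
    calc Real.sqrt (∫ p, (fa p + fb p) ^ 2 ∂ρ) ≤ Real.sqrt (4 * (S1 + S2)) := by
          apply Real.sqrt_le_sqrt; linarith
      _ = Real.sqrt 4 * Real.sqrt (S1 + S2) := Real.sqrt_mul (by norm_num) _
      _ = 2 * Real.sqrt (S1 + S2) := by
          rw [show (4:ℝ) = 2^2 by norm_num, Real.sqrt_sq (by norm_num)]
  -- pointwise bound on the misfit difference
  have hpt : ∀ p, |Φ1 p - Φjoint p| ≤ (1/2) * (fd p * (fa p + fb p)) := by
    intro p
    have h := quad_diff_bound hA (a p) (b p)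
    rw [hba p] at h
    have e1 : Φ1 p = (1/2) * Q (a p) := by rw [hΦ1a]
    have e2 : Φjoint p = (1/2) * Q (b p) := by rw [hΦ2b]
    have e3 : |Φ1 p - Φjoint p| = (1/2) * |Q (a p) - Q (b p)| := by
      rw [e1, e2, ← mul_sub, abs_mul, abs_of_pos (by norm_num : (0:ℝ) < 1/2)]
    rw [e3, hfd, hfa, hfb]
    have : (0:ℝ) ≤ 1/2 := by norm_num
    calc (1/2) * |Q (a p) - Q (b p)|
        ≤ (1/2) * (Real.sqrt (Q (d p)) * (Real.sqrt (Q (a p)) + Real.sqrt (Q (b p)))) :=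
          mul_le_mul_of_nonneg_left h this
      _ = _ := rfl
  have hprod_int : Integrable (fun p => (1/2) * (fd p * (fa p + fb p))) ρ := by
    refine ((hQd_int.const_mul (1/4)).add (hfabsq_int.const_mul (1/4))).mono'
      ((hfdm.mul (hfam.add hfbm)).const_mul _).aestronglyMeasurable ?_
    filter_upwards with p
    have h1 : 0 ≤ fd p := Real.sqrt_nonneg _
    have h2 : 0 ≤ fa p + fb p := add_nonneg (Real.sqrt_nonneg _) (Real.sqrt_nonneg _)
    rw [Real.norm_of_nonneg (by positivity)]
    have hfd2' := hfd2 p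
    show (1/2) * (fd p * (fa p + fb p)) ≤ 1/4 * Q (d p) + 1/4 * (fa p + fb p) ^ 2
    rw [← hfd2']
    nlinarith [sq_nonneg (fd p - (fa p + fb p))]
  have hDbound : D ≤ Real.sqrt I * (Real.sqrt S1 + Real.sqrt S2) := by
    have h1 : D ≤ ∫ p, (1/2) * (fd p * (fa p + fb p)) ∂ρ := by
      rw [hD]
      exact integral_mono ((hΦ1i.sub hij).abs) hprod_int hpt
    have h2 : ∫ p, (1/2) * (fd p * (fa p + fb p)) ∂ρ
        = (1/2) * ∫ p, fd p * (fa p + fb p) ∂ρ := integral_const_mul _ _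
    have h3 : Real.sqrt (S1 + S2) ≤ Real.sqrt S1 + Real.sqrt S2 := sqrt_add_le' hS1nn hS2nn
    have h4 : 0 ≤ Real.sqrt I := Real.sqrt_nonneg _
    calc D ≤ (1/2) * ∫ p, fd p * (fa p + fb p) ∂ρ := by rw [← h2]; exact h1
      _ ≤ (1/2) * (Real.sqrt I * Real.sqrt (∫ p, (fa p + fb p) ^ 2 ∂ρ)) := by
          have : 0 ≤ (1/2:ℝ) := by norm_num
          exact mul_le_mul_of_nonneg_left hH2 this
      _ ≤ (1/2) * (Real.sqrt I * (2 * Real.sqrt (S1 + S2))) := by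
          exact mul_le_mul_of_nonneg_left
            (mul_le_mul_of_nonneg_left hsqrtAB h4) (by norm_num)
      _ = Real.sqrt I * Real.sqrt (S1 + S2) := by ring
      _ ≤ Real.sqrt I * (Real.sqrt S1 + Real.sqrt S2) :=
          mul_le_mul_of_nonneg_left h3 h4
  -- identify the target integral
  have hItgt : ∫ p, |(O (Mdag p.1 - Mappr p.1 - e p)) ⬝ᵥ
      (Γ⁻¹ *ᵥ (O (Mdag p.1 - Mappr p.1 - e p)))| ∂ρ = I := by
    rw [hIdef]
    refine integral_congr_ae (Filter.Eventually.of_forall fun p => ?_)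
    have hO : O (Mdag p.1 - Mappr p.1 - e p) = d p := by
      rw [hddef]; simp [map_sub]
    show |O (Mdag p.1 - Mappr p.1 - e p) ⬝ᵥ Γ⁻¹ *ᵥ O (Mdag p.1 - Mappr p.1 - e p)| = Q (d p)
    rw [hO]
    exact abs_of_nonneg (hQdnn p)
  -- final estimate
  have hsqrt2 : (1:ℝ) ≤ Real.sqrt 2 := by
    rw [show (1:ℝ) = Real.sqrt 1 by simp]
    exact Real.sqrt_le_sqrt (by norm_num)
  have hC : ∀ s : ℝ, s ≤ 2 * S2 + 2 * S1 →
      Real.exp s * D ≤ (Real.sqrt 2 * Real.exp (2 * S2 + 2 * S1) *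
        (Real.sqrt S2 + Real.sqrt S1)) * Real.sqrt I := by
    intro s hs
    have h1 : Real.exp s * D ≤ Real.exp s * (Real.sqrt I * (Real.sqrt S1 + Real.sqrt S2)) :=
      mul_le_mul_of_nonneg_left hDbound (Real.exp_pos _).le
    have h2 : Real.exp s ≤ Real.sqrt 2 * Real.exp (2 * S2 + 2 * S1) := by
      calc Real.exp s ≤ Real.exp (2 * S2 + 2 * S1) := Real.exp_le_exp.2 hs
        _ ≤ Real.sqrt 2 * Real.exp (2 * S2 + 2 * S1) := by
            nlinarith [Real.exp_pos (2 * S2 + 2 * S1)]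
    have h3 : 0 ≤ Real.sqrt I * (Real.sqrt S1 + Real.sqrt S2) := by positivity
    calc Real.exp s * D ≤ Real.exp s * (Real.sqrt I * (Real.sqrt S1 + Real.sqrt S2)) := h1
      _ ≤ (Real.sqrt 2 * Real.exp (2 * S2 + 2 * S1)) *
            (Real.sqrt I * (Real.sqrt S1 + Real.sqrt S2)) :=
          mul_le_mul_of_nonneg_right h2 h3
      _ = (Real.sqrt 2 * Real.exp (2 * S2 + 2 * S1) *
            (Real.sqrt S2 + Real.sqrt S1)) * Real.sqrt I := by ring
  rw [hpp, hsj, hsd, hItgt]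
  apply max_le
  · refine le_trans (kl_posterior_le hΦ1m hΦjm hΦ1i hij hΦ1p hΦjp) ?_
    apply ENNReal.ofReal_le_ofReal
    exact hC S1 (by linarith)
  · refine le_trans (kl_posterior_le hΦjm hΦ1m hij hΦ1i hΦjp hΦ1p) ?_
    apply ENNReal.ofReal_le_ofReal
    have hDsymm : ∫ p, |Φjoint p - Φ1 p| ∂ρ = D := by
      rw [hD]
      exact integral_congr_ae (Filter.Eventually.of_forall fun p => abs_sub_comm _ _)
    rw [hDsymm]
    exact hC S2 (by linarith)
end

section
/- If the approximate misfit Φ^a is in L¹_{μ_θ} and the joint misfit Φ^j is in L¹_{μ_θ⊗μ_δ}, then ‖Φ^a − Φ^j‖_{L¹_{μ_θ⊗μ_δ}} ≤ 2^{−1/2} · ( ∫∫ |O(e(θ,w))|²_{Σ_η^{−1}} d(μ_θ⊗μ_δ)(θ,w) )^{1/2} · ( ‖Φ^j‖_{L¹_{μ_θ⊗μ_δ}}^{1/2} + ‖Φ^a‖_{L¹_{μ_θ}}^{1/2} ), where Φ^a is lifted to X × W by Φ^a(θ,w) := Φ^a(θ). Furthermore, ( ∫∫ |O(e(θ,w))|²_{Σ_η^{−1}}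 d(μ_θ⊗μ_δ) )^{1/2} ≤ 2^{1/2} · ( ‖Φ^j‖_{L¹_{μ_θ⊗μ_δ}}^{1/2} + ‖Φ^a‖_{L¹_{μ_θ}}^{1/2} ). -/
open MeasureTheory Real Matrix

lemma key_id {n : ℕ} (S : Matrix (Fin n) (Fin n) ℝ) (hS : S.IsHermitian) (v : Fin n → ℝ) :
    v ⬝ᵥ ((S * S) *ᵥ v) = ‖(EuclideanSpace.equiv (Fin n) ℝ).symm (S *ᵥ v)‖ ^ 2 := by
  have hT : Sᵀ = S := by
    ext i j
    simpa using congrFun (congrFun hS i) j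
  rw [← mulVec_mulVec, dotProduct_mulVec, ← mulVec_transpose, hT]
  rw [EuclideanSpace.norm_eq, Real.sq_sqrt (by positivity)]
  simp [dotProduct, Real.norm_eq_abs, sq_abs, pow_two]

lemma cs_int {α : Type*} [MeasurableSpace α] (μ : Measure α) (f g : α → ℝ)
    (hf : ∀ x, 0 ≤ f x) (hg : ∀ x, 0 ≤ g x)
    (mf : MemLp f 2 μ) (mg : MemLp g 2 μ) :
    ∫ x, f x * g x ∂μ ≤ Real.sqrt (∫ x, f x ^ 2 ∂μ) * Real.sqrt (∫ x, g x ^ 2 ∂μ) := by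
  have h2 : ENNReal.ofReal (2 : ℝ) = 2 := by norm_num
  have hpq : (2 : ℝ).HolderConjugate 2 := Real.holderConjugate_iff.mpr ⟨one_lt_two, by norm_num⟩
  have := integral_mul_le_Lp_mul_Lq_of_nonneg hpq (Filter.Eventually.of_forall hf)
    (Filter.Eventually.of_forall hg) (h2 ▸ mf) (h2 ▸ mg)
  simp only [Real.rpow_two] at this
  rw [← Real.sqrt_eq_rpow, ← Real.sqrt_eq_rpow] at this
  simpa using this


lemma mul_int2 {α : Type*} [MeasurableSpace α] {μ : Measure α} {f g : α → ℝ}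
    (mf : MemLp f 2 μ) (mg : MemLp g 2 μ) : Integrable (fun x => f x * g x) μ := by
  have h : (1 : ENNReal) / 1 = 1 / 2 + 1 / 2 := by
    simp only [one_div, inv_one]
    exact ENNReal.inv_two_add_inv_two.symm
  haveI : ENNReal.HolderTriple 2 2 1 := ⟨by simpa [one_div] using h.symm⟩
  have := mg.smul (r := 1) mf
  rw [memLp_one_iff_integrable] at this
  exact this

set_option maxHeartbeats 1000000 in
theorem stmt12 {X W U : Type*} [MeasurableSpace X] [MeasurableSpace W]
    [NormedAddCommGroup U] [NormedSpace ℝ U] [CompleteSpace U]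
    [MeasurableSpace U] [BorelSpace U]
    (μθ : Measure X) [IsProbabilityMeasure μθ] (μδ : Measure W) [IsProbabilityMeasure μδ]
    {n : ℕ}
    (Mappr : X → U) (hMappr : Measurable Mappr)
    (e : X × W → U) (he : Measurable e)
    (O : U →L[ℝ] (Fin n → ℝ)) (y : Fin n → ℝ)
    (Γ : Matrix (Fin n) (Fin n) ℝ) (hΓ : Γ.PosDef)
    (Φappr : X → ℝ) (Φjoint : X × W → ℝ)
    (hΦappr : Φappr = fun θ => (1/2) * ((y - O (Mappr θ)) ⬝ᵥ (Γ⁻¹ *ᵥ (y - O (Mappr θ)))))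
    (hΦjoint : Φjoint = fun p => (1/2) *
      ((y - O (Mappr p.1) - O (e p)) ⬝ᵥ (Γ⁻¹ *ᵥ (y - O (Mappr p.1) - O (e p)))))
    (hia : Integrable Φappr μθ) (hij : Integrable Φjoint (μθ.prod μδ)) :
    (∫ p, |Φappr p.1 - Φjoint p| ∂(μθ.prod μδ)) ≤
      (Real.sqrt 2)⁻¹ *
        Real.sqrt (∫ p, |(O (e p)) ⬝ᵥ (Γ⁻¹ *ᵥ (O (e p)))| ∂(μθ.prod μδ)) *
        (Real.sqrt (∫ p, |Φjoint p| ∂(μθ.prod μδ)) + Real.sqrt (∫ θ, |Φappr θ| ∂μθ)) ∧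
    Real.sqrt (∫ p, |(O (e p)) ⬝ᵥ (Γ⁻¹ *ᵥ (O (e p)))| ∂(μθ.prod μδ)) ≤
      Real.sqrt 2 *
        (Real.sqrt (∫ p, |Φjoint p| ∂(μθ.prod μδ)) + Real.sqrt (∫ θ, |Φappr θ| ∂μθ)) := by
  have hL : (Γ⁻¹).PosDef := hΓ.inv
  set S : Matrix (Fin n) (Fin n) ℝ := (open scoped MatrixOrder in CFC.sqrt Γ⁻¹) with hSdef
  have hSS : S * S = Γ⁻¹ := by
    open scoped MatrixOrder in exact CFC.sqrt_mul_sqrt_self _ hL.posSemidef.nonneg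
  have hSherm : S.IsHermitian := by
    open scoped MatrixOrder in exact (CFC.sqrt_nonneg _).posSemidef.1
  set T : (Fin n → ℝ) → EuclideanSpace ℝ (Fin n) :=
    fun w => (EuclideanSpace.equiv (Fin n) ℝ).symm (S *ᵥ w) with hTdef
  have hkey : ∀ w, w ⬝ᵥ (Γ⁻¹ *ᵥ w) = ‖T w‖ ^ 2 := by
    intro w
    rw [← hSS, hTdef]
    exact key_id S hSherm w
  have hTsub : ∀ a b, T (a - b) = T a - T b := by
    intro a b
    simp [hTdef, Matrix.mulVec_sub]
  have hTcont : Continuous T := by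
    exact ((EuclideanSpace.equiv (Fin n) ℝ).symm.continuous).comp
      (S.mulVecLin.continuous_of_finiteDimensional)
  set Pm := μθ.prod μδ with hPm
  set u : X × W → EuclideanSpace ℝ (Fin n) := fun p => T (y - O (Mappr p.1)) with hu
  set v : X × W → EuclideanSpace ℝ (Fin n) := fun p => T (O (e p)) with hv
  have hum : Measurable u :=
    hTcont.measurable.comp (measurable_const.sub
      (O.continuous.measurable.comp (hMappr.comp measurable_fst)))
  have hvm : Measurable v :=
    hTcont.measurable.comp (O.continuous.measurable.comp he)
  -- pointwise identities
  have hΦa0 : ∀ θ, Φappr θ = 1/2 * ‖T (y - O (Mappr θ))‖ ^ 2 := by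
    intro θ; rw [hΦappr]; simp only [hkey]
  have hΦa : ∀ p : X × W, Φappr p.1 = 1/2 * ‖u p‖ ^ 2 := fun p => hΦa0 p.1
  have hΦj : ∀ p, Φjoint p = 1/2 * ‖u p - v p‖ ^ 2 := by
    intro p
    rw [hΦjoint]
    simp only []
    rw [hkey, hTsub]
  have hVfun : (fun p => |(O (e p)) ⬝ᵥ (Γ⁻¹ *ᵥ (O (e p)))|) = fun p => ‖v p‖ ^ 2 := by
    funext p
    rw [hkey]
    exact abs_of_nonneg (sq_nonneg _)
  -- integrals
  set J := ∫ p, |Φjoint p| ∂Pm with hJdef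
  set A := ∫ θ, |Φappr θ| ∂μθ with hAdef
  have hJfun : (fun p => ‖u p - v p‖ ^ 2) = fun p => 2 * |Φjoint p| := by
    funext p
    rw [abs_of_nonneg (by rw [hΦj p]; positivity), hΦj p]; ring
  have hAfun : (fun θ => ‖T (y - O (Mappr θ))‖ ^ 2) = fun θ => 2 * |Φappr θ| := by
    funext θ
    rw [abs_of_nonneg (by rw [hΦa0 θ]; positivity), hΦa0 θ]; ring
  have hJeq : ∫ p, ‖u p - v p‖ ^ 2 ∂Pm = 2 * J := by
    rw [hJfun, integral_const_mul]
  have hj2 : Integrable (fun p => ‖u p - v p‖ ^ 2) Pm := by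
    rw [hJfun]; exact (hij.abs.const_mul 2)
  have hqa : Integrable (fun θ => ‖T (y - O (Mappr θ))‖ ^ 2) μθ := by
    rw [hAfun]; exact (hia.abs.const_mul 2)
  have hmap : Pm.map Prod.fst = μθ := by
    rw [hPm, Measure.map_fst_prod]; simp
  have hqm : Measurable fun θ => ‖T (y - O (Mappr θ))‖ ^ 2 :=
    ((hTcont.measurable.comp (measurable_const.sub
      (O.continuous.measurable.comp hMappr))).norm).pow_const 2
  have hAeq : ∫ p, ‖u p‖ ^ 2 ∂Pm = 2 * A := by
    have h1 : ∫ p, ‖u p‖ ^ 2 ∂Pm = ∫ θ, ‖T (y - O (Mappr θ))‖ ^ 2 ∂μθ := by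
      rw [← hmap, integral_map measurable_fst.aemeasurable hqm.aestronglyMeasurable]
    rw [h1, hAfun, integral_const_mul]
  have ha2 : Integrable (fun p => ‖u p‖ ^ 2) Pm := by
    have h1 : Integrable (fun θ => ‖T (y - O (Mappr θ))‖ ^ 2) (Pm.map Prod.fst) := by
      rwa [hmap]
    exact (integrable_map_measure hqm.aestronglyMeasurable
      measurable_fst.aemeasurable).1 h1
  have iΦa' : Integrable (fun p : X × W => Φappr p.1) Pm := by
    have h1 : Integrable Φappr (Pm.map Prod.fst) := by rwa [hmap]
    exact (integrable_map_measure (by rw [hmap]; exact hia.aestronglyMeasurable : AEStronglyMeasurable Φappr (Pm.map Prod.fst))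
      measurable_fst.aemeasurable).1 h1
  -- Memℒp facts
  have mh : MemLp (fun p => ‖u p - v p‖) 2 Pm :=
    (memLp_two_iff_integrable_sq ((hum.sub hvm).norm.aestronglyMeasurable)).2 hj2
  have mg : MemLp (fun p => ‖u p‖) 2 Pm :=
    (memLp_two_iff_integrable_sq (hum.norm.aestronglyMeasurable)).2 ha2
  have hFle : ∀ p, ‖v p‖ ≤ ‖u p‖ + ‖u p - v p‖ := by
    intro p
    have h := norm_sub_le (u p) (u p - v p)
    rwa [sub_sub_cancel] at h
  have mgh : MemLp (fun p => ‖u p‖ + ‖u p - v p‖) 2 Pm := by exact mg.add mh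
  have mf : MemLp (fun p => ‖v p‖) 2 Pm := by
    refine MemLp.of_le mgh (hvm.norm.aestronglyMeasurable) ?_
    filter_upwards with p
    rw [Real.norm_of_nonneg (norm_nonneg _),
      Real.norm_of_nonneg (add_nonneg (norm_nonneg _) (norm_nonneg _))]
    exact hFle p
  have hf2 : Integrable (fun p => ‖v p‖ ^ 2) Pm :=
    (memLp_two_iff_integrable_sq (hvm.norm.aestronglyMeasurable)).1 mf
  have hVeq : ∫ p, |(O (e p)) ⬝ᵥ (Γ⁻¹ *ᵥ (O (e p)))| ∂Pm = ∫ p, ‖v p‖ ^ 2 ∂Pm := by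
    rw [hVfun]
  set V := ∫ p, |(O (e p)) ⬝ᵥ (Γ⁻¹ *ᵥ (O (e p)))| ∂Pm with hVdef
  -- Cauchy-Schwarz instances
  have csg : ∫ p, ‖v p‖ * ‖u p‖ ∂Pm ≤ Real.sqrt V * Real.sqrt (2 * A) := by
    have := cs_int Pm _ _ (fun p => norm_nonneg (v p)) (fun p => norm_nonneg (u p)) mf mg
    rwa [← hVeq, hAeq] at this
  have csh : ∫ p, ‖v p‖ * ‖u p - v p‖ ∂Pm ≤ Real.sqrt V * Real.sqrt (2 * J) := by
    have := cs_int Pm _ _ (fun p => norm_nonneg (v p)) (fun p => norm_nonneg (u p - v p)) mf mh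
    rwa [← hVeq, hJeq] at this
  have hJ0 : 0 ≤ J := integral_nonneg fun p => abs_nonneg _
  have hA0 : 0 ≤ A := integral_nonneg fun θ => abs_nonneg _
  have hV0 : 0 ≤ V := integral_nonneg fun p => abs_nonneg _
  have h2J : Real.sqrt (2 * J) = Real.sqrt 2 * Real.sqrt J := Real.sqrt_mul (by norm_num) J
  have h2A : Real.sqrt (2 * A) = Real.sqrt 2 * Real.sqrt A := Real.sqrt_mul (by norm_num) A
  have hs2 : Real.sqrt 2 * Real.sqrt 2 = 2 := Real.mul_self_sqrt (by norm_num)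
  have hs2pos : 0 < Real.sqrt 2 := Real.sqrt_pos.2 (by norm_num)
  constructor
  · -- first inequality
    have hpt : ∀ p, |Φappr p.1 - Φjoint p| ≤
        1/2 * (‖v p‖ * ‖u p‖ + ‖v p‖ * ‖u p - v p‖) := by
      intro p
      rw [hΦa p, hΦj p]
      have h1 : |‖u p‖ - ‖u p - v p‖| ≤ ‖v p‖ := by
        have := abs_norm_sub_norm_le (u p) (u p - v p)
        simpa using this
      obtain ⟨h1a, h1b⟩ := abs_le.1 h1
      have ha := norm_nonneg (u p)
      have hb := norm_nonneg (u p - v p)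
      have hc := norm_nonneg (v p)
      rw [abs_le]
      constructor <;> nlinarith [mul_le_mul_of_nonneg_right h1b (add_nonneg ha hb),
        mul_le_mul_of_nonneg_right (neg_le_sub_iff_le_add.1 h1a) (add_nonneg ha hb)]
    have hint : ∫ p, |Φappr p.1 - Φjoint p| ∂Pm ≤
        ∫ p, 1/2 * (‖v p‖ * ‖u p‖ + ‖v p‖ * ‖u p - v p‖) ∂Pm := by
      refine integral_mono ((iΦa'.sub hij).abs) ?_ hpt
      exact (((mul_int2 mf mg).add (mul_int2 mf mh)).const_mul _)
    have hfg : Integrable (fun p => ‖v p‖ * ‖u p‖) Pm := mul_int2 mf mg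
    have hfh : Integrable (fun p => ‖v p‖ * ‖u p - v p‖) Pm := mul_int2 mf mh
    have hsplit : ∫ p, 1/2 * (‖v p‖ * ‖u p‖ + ‖v p‖ * ‖u p - v p‖) ∂Pm =
        1/2 * ((∫ p, ‖v p‖ * ‖u p‖ ∂Pm) + ∫ p, ‖v p‖ * ‖u p - v p‖ ∂Pm) := by
      rw [integral_const_mul, integral_add hfg hfh]
    have hVs := Real.sqrt_nonneg V
    have hJs := Real.sqrt_nonneg J
    have hAs := Real.sqrt_nonneg A
    calc ∫ p, |Φappr p.1 - Φjoint p| ∂Pm ≤ _ := hint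
      _ = 1/2 * ((∫ p, ‖v p‖ * ‖u p‖ ∂Pm) + ∫ p, ‖v p‖ * ‖u p - v p‖ ∂Pm) := hsplit
      _ ≤ 1/2 * (Real.sqrt V * Real.sqrt (2 * A) + Real.sqrt V * Real.sqrt (2 * J)) := by
          linarith
      _ = (Real.sqrt 2)⁻¹ * Real.sqrt V * (Real.sqrt J + Real.sqrt A) := by
          rw [h2J, h2A]
          have hmul : Real.sqrt 2 * (Real.sqrt 2)⁻¹ = 1 := mul_inv_cancel₀ (ne_of_gt hs2pos)
          have hinv : (Real.sqrt 2)⁻¹ = Real.sqrt 2 / 2 := by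
            rw [eq_div_iff (two_ne_zero : (2:ℝ) ≠ 0)]
            linear_combination Real.sqrt 2 * hmul - (Real.sqrt 2)⁻¹ * hs2
          rw [hinv]; ring
  · -- second inequality
    have hpt2 : ∀ p, ‖v p‖ ^ 2 ≤ ‖v p‖ * ‖u p‖ + ‖v p‖ * ‖u p - v p‖ := by
      intro p
      have := mul_le_mul_of_nonneg_left (hFle p) (norm_nonneg (v p))
      nlinarith [norm_nonneg (v p)]
    have hVle : V ≤ Real.sqrt V * Real.sqrt (2 * A) + Real.sqrt V * Real.sqrt (2 * J) := by
      have hint2 : ∫ p, ‖v p‖ ^ 2 ∂Pm ≤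
          ∫ p, (‖v p‖ * ‖u p‖ + ‖v p‖ * ‖u p - v p‖) ∂Pm := by
        refine integral_mono hf2 ((mul_int2 mf mg).add (mul_int2 mf mh)) hpt2
      have hsplit2 : ∫ p, (‖v p‖ * ‖u p‖ + ‖v p‖ * ‖u p - v p‖) ∂Pm =
          (∫ p, ‖v p‖ * ‖u p‖ ∂Pm) + ∫ p, ‖v p‖ * ‖u p - v p‖ ∂Pm :=
        integral_add (mul_int2 mf mg) (mul_int2 mf mh)
      calc V = ∫ p, ‖v p‖ ^ 2 ∂Pm := hVeq
        _ ≤ _ := hint2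
        _ = _ := hsplit2
        _ ≤ _ := by linarith [csg, csh]
    have hd0 : 0 ≤ Real.sqrt (2 * A) + Real.sqrt (2 * J) :=
      add_nonneg (Real.sqrt_nonneg _) (Real.sqrt_nonneg _)
    have hcle : Real.sqrt V ≤ Real.sqrt (2 * A) + Real.sqrt (2 * J) := by
      rcases eq_or_lt_of_le (Real.sqrt_nonneg V) with hc | hc
      · rw [← hc]; exact hd0
      · have hsq : Real.sqrt V * Real.sqrt V = V := Real.mul_self_sqrt hV0
        have : Real.sqrt V * Real.sqrt V ≤
            Real.sqrt V * (Real.sqrt (2 * A) + Real.sqrt (2 * J)) := by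
          rw [hsq]; linarith [hVle]
        exact le_of_mul_le_mul_left this hc
    calc Real.sqrt V ≤ Real.sqrt (2 * A) + Real.sqrt (2 * J) := hcle
      _ = Real.sqrt 2 * (Real.sqrt J + Real.sqrt A) := by rw [h2J, h2A]; ring
end
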